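/- Let f, g : X → ℝ ∪ {+∞} be proper convex functions with dom f ⊆ dom g, A ⊆ X nonempty and let (u*,v*,γ) ∈ dom g^c. Then (f − c(·,(u*,v*,γ)))^c(−x*,−y*,α) = f^c(u* − x*, −y*, α) for all x*, y* ∈ X*, α ∈ ℝ. -/

import Mathlib

noncomputable section
open Classical

/-- The space `W = X* × X* × ℝ` of the c-conjugation scheme. -/
abbrev W (X : Type*) [AddCommGroup X] [Module ℝ X] [TopologicalSpace X] : Type _ :=
  (X →L[ℝ] ℝ) × (X →L[ℝ] ℝ) × ℝ

variable {X : Type*} [AddCommGroup X] [Module ℝ X] [TopologicalSpace X]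

/-- The coupling function `c(x,(x*,y*,α)) = ⟨x,x*⟩` if `⟨x,y*⟩ < α`, `+∞` otherwise. -/
def cpl (x : X) (w : W X) : EReal :=
  if w.2.1 x < w.2.2 then ((w.1 x : ℝ) : EReal) else ⊤

/-- The c-conjugate `f^c(w) = sup_x { c(x,w) − f(x) }`. -/
def cConj (f : X → EReal) (w : W X) : EReal := ⨆ x : X, cpl x w - f x

/-- The c'-conjugate `h^{c'}(x) = sup_w { c'(w,x) − h(w) }`. -/
def cpConj (h : W X → EReal) (x : X) : EReal := ⨆ w : W X, cpl x w - h w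

/-- Subtraction with the DC convention `(+∞) − (+∞) = +∞`. -/
def dcSub (a b : EReal) : EReal := if a = ⊤ then ⊤ else a - b

/-- Indicator function `δ_A`. -/
def indic (A : Set X) (x : X) : EReal := if x ∈ A then (0 : EReal) else ⊤

/-- Epigraph of a function on `W`. -/
def epiW (h : W X → EReal) : Set (W X × ℝ) := {p | h p.1 ≤ (p.2 : EReal)}

/-- Effective domain. -/
def domE {α : Type*} (f : α → EReal) : Set α := {x | f x ≠ ⊤}

/-- The inner expression of the Fenchel-type dual problems. -/
def dualExpr (f g : X → EReal) (A : Set X) (z w : W X) : EReal :=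
  cConj g w - cConj f (w.1 - z.1, -z.2.1, z.2.2) - cConj (indic A) z

/-- The set `Z = X* × X* × ℝ_{++}`. -/
def Zset (X : Type*) [AddCommGroup X] [Module ℝ X] [TopologicalSpace X] : Set (W X) :=
  {z | 0 < z.2.2}

/-- Primal optimal value `v(P) = inf_X { f − g + δ_A }`. -/
def vP (f g : X → EReal) (A : Set X) : EReal := ⨅ x : X, dcSub (f x) (g x) + indic A x

/-- Dual optimal value `v(D^F)`. -/
def vDF (f g : X → EReal) (A : Set X) : EReal :=
  ⨆ z ∈ Zset X, ⨅ w ∈ domE (cConj g), dualExpr f g A z w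

/-- Dual optimal value `v(D̄^F)`. -/
def vDbarF (f g : X → EReal) (A : Set X) : EReal :=
  ⨅ w ∈ domE (cConj g), ⨆ z ∈ Zset X, dualExpr f g A z w

/-- The set `Ω`. -/
def OmegaSet (f g : X → EReal) (A : Set X) : Set (W X × ℝ) :=
  ⋃ z ∈ domE (cConj (indic A)), ⋂ w ∈ domE (cConj g),
    (fun p : W X × ℝ =>
        p - ((w.1, 0, 0), (cConj g w).toReal - (cConj (indic A) z).toReal)) ''
      epiW (cConj (fun x => dcSub (f x) (cpl x (-z.1, -z.2.1, z.2.2))))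

/-- The set `K`. -/
def Kset (f g : X → EReal) (A : Set X) : Set (W X × ℝ) :=
  ⋂ w ∈ domE (cConj g), ⋃ z ∈ domE (cConj (indic A)),
    (fun p : W X × ℝ =>
        p - ((w.1, 0, 0), (cConj g w).toReal - (cConj (indic A) z).toReal)) ''
      epiW (cConj (fun x => dcSub (f x) (cpl x (-z.1, -z.2.1, z.2.2))))

/-- The set `B = {(0,0)} × ℝ_{++} × ℝ`. -/
def Bset (X : Type*) [AddCommGroup X] [Module ℝ X] [TopologicalSpace X] :
    Set (W X × ℝ) :=
  {p | p.1.1 = 0 ∧ p.1.2.1 = 0 ∧ 0 < p.1.2.2}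

/-- Properness of an extended-real-valued function. -/
def ProperFn {α : Type*} (f : α → EReal) : Prop := (∀ x, f x ≠ ⊥) ∧ ∃ x, f x ≠ ⊤

/-- Convexity of an extended-real-valued function via its epigraph. -/
def ConvexFn (f : X → EReal) : Prop := Convex ℝ {p : X × ℝ | f p.1 ≤ (p.2 : EReal)}

/-- Evenly convex set. -/
def EvenlyConvexSet {Y : Type*} [AddCommGroup Y] [Module ℝ Y] [TopologicalSpace Y]
    (C : Set Y) : Prop :=
  ∀ y0 ∉ C, ∃ φ : Y →L[ℝ] ℝ, ∀ y ∈ C, φ (y - y0) < 0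

/-- Evenly convex function: its epigraph is an evenly convex subset of `X × ℝ`. -/
def EConvexFn (f : X → EReal) : Prop :=
  EvenlyConvexSet {p : X × ℝ | f p.1 ≤ (p.2 : EReal)}


/-- If `f, g` are proper convex, `dom f ⊆ dom g`, `A ≠ ∅` and `(u*,v*,γ) ∈ dom g^c`,
then `(f − c(·,(u*,v*,γ)))^c(−x*,−y*,α) = f^c(u*−x*,−y*,α)`. -/
theorem cConj_sub_coupling
    {X : Type*} [AddCommGroup X] [Module ℝ X] [TopologicalSpace X]
    (f g : X → EReal) (A : Set X) (hA : A.Nonempty)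
    (hf : ProperFn f) (hfc : ConvexFn f) (hg : ProperFn g) (hgc : ConvexFn g)
    (hdom : domE f ⊆ domE g)
    (us vs : X →L[ℝ] ℝ) (γ : ℝ) (hw : (us, vs, γ) ∈ domE (cConj g))
    (xs ys : X →L[ℝ] ℝ) (α : ℝ) :
    cConj (fun x => dcSub (f x) (cpl x (us, vs, γ))) (-xs, -ys, α) =
      cConj f (us - xs, -ys, α) := by
  have hdomv : ∀ x : X, f x ≠ ⊤ → vs x < γ := by
    intro x hx
    by_contra hlt
    have hgx : g x ≠ ⊤ := hdom hx
    have hcpl : cpl x (us, vs, γ) = ⊤ := by simp [cpl, hlt]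
    have : cConj g (us, vs, γ) = ⊤ := by
      refine top_le_iff.mp (le_trans ?_ (le_iSup _ x))
      rw [hcpl]
      lift g x to ℝ using ⟨hgx, hg.1 x⟩ with s hs
      rw [EReal.top_sub_coe]
    exact hw this
  unfold cConj
  refine iSup_congr fun x => ?_
  by_cases hfx : f x = ⊤
  · have hsub : dcSub (f x) (cpl x (us, vs, γ)) = ⊤ := by simp [dcSub, hfx]
    show cpl x (-xs, -ys, α) - dcSub (f x) (cpl x (us, vs, γ)) = _
    rw [hsub, hfx]
    have h1 : ∀ a : EReal, a - ⊤ = ⊥ := fun a => by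
      induction a using EReal.rec <;> simp [sub_eq_add_neg]
    rw [h1, h1]
  · have hvlt : vs x < γ := hdomv x hfx
    have hcpl : cpl x (us, vs, γ) = ((us x : ℝ) : EReal) := by simp [cpl, hvlt]
    have hfb : f x ≠ ⊥ := hf.1 x
    show cpl x (-xs, -ys, α) - dcSub (f x) (cpl x (us, vs, γ)) = _
    lift f x to ℝ using ⟨hfx, hfb⟩ with r hr
    have hsub : dcSub ((r : EReal)) (cpl x (us, vs, γ)) = ((r - us x : ℝ) : EReal) := by
      rw [hcpl]; simp [dcSub, EReal.coe_sub]
    rw [hsub]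
    by_cases hya : (-ys) x < α
    · have h1 : cpl x (-xs, -ys, α) = (((-xs) x : ℝ) : EReal) := by
        unfold cpl; rw [if_pos hya]
      have h2 : cpl x (us - xs, -ys, α) = (((us - xs) x : ℝ) : EReal) := by
        unfold cpl; rw [if_pos hya]
      rw [h1, h2, ← EReal.coe_sub, ← EReal.coe_sub, EReal.coe_eq_coe_iff]
      simp; ring
    · have h1 : cpl x (-xs, -ys, α) = ⊤ := by unfold cpl; rw [if_neg hya]
      have h2 : cpl x (us - xs, -ys, α) = ⊤ := by unfold cpl; rw [if_neg hya]
      rw [h1, h2, EReal.top_sub_coe, EReal.top_sub_coe]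
end
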